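/- Let X be a real Banach space, let A, B : X →L[ℝ] X be bounded linear operators that commute (A ∘ B = B ∘ A), let τ > 0, and let M ≥ 0 satisfy ‖exp(s·A)‖ ≤ M and ‖exp(s·B)‖ ≤ M for all s ∈ [0, τ]. Then ‖τ·φ₁(τ·(A+B)) − τ·exp((τ/2)·A) ∘ φ₁(τ·B)‖ ≤ M² · (‖B ∘ A‖ + ‖A ∘ A‖) · τ³. -/

import Mathlib

open MeasureTheory intervalIntegral
open scoped Nat

/-- The operator `φ_ℓ(T) = ∑_{k=0}^∞ T^k / (ℓ+k)!` (for `ℓ = 0` this is `exp T`). -/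
noncomputable def phi {X : Type*} [NormedAddCommGroup X] [NormedSpace ℝ X] [CompleteSpace X]
    (ℓ : ℕ) (T : X →L[ℝ] X) : X →L[ℝ] X :=
  ∑' k : ℕ, (((ℓ + k)! : ℝ)⁻¹) • T ^ k


set_option synthInstance.maxHeartbeats 1000000
set_option maxHeartbeats 1000000

section Aux

lemma opnorm_pow_le {X : Type*} [NormedAddCommGroup X] [NormedSpace ℝ X]
    (a : X →L[ℝ] X) (k : ℕ) : ‖a ^ k‖ ≤ ‖a‖ ^ k := by
  cases k with
  | zero => simpa [ContinuousLinearMap.one_def] using ContinuousLinearMap.norm_id_le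
  | succ n => exact norm_pow_le' a n.succ_pos

variable {X : Type*} [NormedAddCommGroup X] [NormedSpace ℝ X] [CompleteSpace X]

lemma contExp (T : X →L[ℝ] X) : Continuous fun s : ℝ => NormedSpace.exp (s • T) := by
  let +nondep : NormedAlgebra ℚ (X →L[ℝ] X) := .restrictScalars ℚ ℝ _
  exact NormedSpace.exp_continuous.comp (continuous_id.smul continuous_const)

lemma integral_exp_eq (T : X →L[ℝ] X) {τ : ℝ} (hτ : 0 ≤ τ) :
    ∫ s in (0:ℝ)..τ, NormedSpace.exp (s • T) = τ • phi 1 (τ • T) := by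
  have hsummable : Summable (fun k : ℕ => (((1 + k)! : ℝ)⁻¹) • (τ • T) ^ k) := by
    apply Summable.of_norm_bounded (Real.summable_pow_div_factorial ‖τ • T‖)
    intro k
    rw [norm_smul ((((1 + k)! : ℝ))⁻¹) ((τ • T) ^ k)]
    have h1 : ‖(τ • T) ^ k‖ ≤ ‖τ • T‖ ^ k := opnorm_pow_le _ _
    have h2 : ‖(((1 + k)! : ℝ)⁻¹)‖ ≤ ((k ! : ℝ))⁻¹ := by
      rw [Real.norm_eq_abs, abs_of_nonneg (by positivity)]
      apply inv_anti₀ (by positivity)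
      exact_mod_cast Nat.factorial_le (by omega)
    calc ‖(((1 + k)! : ℝ)⁻¹)‖ * ‖(τ • T) ^ k‖ ≤ ((k ! : ℝ))⁻¹ * ‖τ • T‖ ^ k := by
          apply mul_le_mul h2 h1 (norm_nonneg _) (by positivity)
      _ = ‖τ • T‖ ^ k / (k ! : ℝ) := by ring
  have hphi : HasSum (fun k : ℕ => (((1 + k)! : ℝ)⁻¹) • (τ • T) ^ k) (phi 1 (τ • T)) := by
    exact hsummable.hasSum
  have h2 : HasSum (fun k : ℕ => τ • ((((1 + k)! : ℝ)⁻¹) • (τ • T) ^ k)) (τ • phi 1 (τ • T)) :=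
    hphi.const_smul τ
  set F : ℕ → ℝ → (X →L[ℝ] X) := fun k s => (((k)! : ℝ)⁻¹ * s ^ k) • T ^ k with hF
  have hFcont : ∀ k, Continuous (F k) := fun k =>
    ((continuous_const.mul (continuous_pow k)).smul continuous_const)
  have hFint : ∀ k, IntegrableOn (F k) (Set.Ioc (0:ℝ) τ) := fun k =>
    (hFcont k).integrableOn_Ioc
  have hbound : ∀ k, (∫ s in Set.Ioc (0:ℝ) τ, ‖F k s‖) ≤ τ * (‖τ • T‖ ^ k / (k ! : ℝ)) := by
    intro k
    have : ∀ s ∈ Set.Ioc (0:ℝ) τ, ‖F k s‖ ≤ ‖τ • T‖ ^ k / (k ! : ℝ) := by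
      intro s hs
      rw [hF]
      simp only
      rw [norm_smul ((((k)! : ℝ))⁻¹ * s ^ k) (T ^ k), Real.norm_eq_abs, abs_mul, abs_of_nonneg (by positivity : (0:ℝ) ≤ ((k)! : ℝ)⁻¹),
        abs_of_nonneg (pow_nonneg hs.1.le k)]
      calc ((k)! : ℝ)⁻¹ * s ^ k * ‖T ^ k‖ ≤ ((k)! : ℝ)⁻¹ * τ ^ k * ‖T‖ ^ k := by
            apply mul_le_mul _ (opnorm_pow_le _ _) (norm_nonneg _) (by positivity)
            exact mul_le_mul_of_nonneg_left (pow_le_pow_left₀ hs.1.le hs.2 k) (by positivity)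
        _ = ‖τ • T‖ ^ k / (k ! : ℝ) := by
            rw [norm_smul τ T, Real.norm_eq_abs, abs_of_nonneg hτ, mul_pow]; ring
    calc (∫ s in Set.Ioc (0:ℝ) τ, ‖F k s‖) ≤ ∫ s in Set.Ioc (0:ℝ) τ, (‖τ • T‖ ^ k / (k ! : ℝ)) := by
          apply setIntegral_mono_on (hFint k).norm (integrableOn_const measure_Ioc_lt_top.ne)
            measurableSet_Ioc this
      _ = (volume (Set.Ioc (0:ℝ) τ)).toReal * (‖τ • T‖ ^ k / (k ! : ℝ)) := by
          rw [setIntegral_const]; rfl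
      _ ≤ τ * (‖τ • T‖ ^ k / (k ! : ℝ)) := by
          rw [Real.volume_Ioc, sub_zero, ENNReal.toReal_ofReal hτ]
  have hsumnorm : Summable fun k => ∫ s in Set.Ioc (0:ℝ) τ, ‖F k s‖ :=
    Summable.of_nonneg_of_le (fun k => integral_nonneg (fun s => norm_nonneg _)) hbound
      ((Real.summable_pow_div_factorial ‖τ • T‖).mul_left τ)
  have hHS := MeasureTheory.hasSum_integral_of_summable_integral_norm (μ := volume.restrict (Set.Ioc (0:ℝ) τ)) hFint hsumnorm
  have hexp : ∀ s : ℝ, (∑' k, F k s) = NormedSpace.exp (s • T) := by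
    intro s
    rw [NormedSpace.exp_eq_tsum (𝕂 := ℝ)]
    congr 1
    funext k
    rw [hF]
    simp only [smul_pow, smul_smul]
  have heval : ∀ k, (∫ s in Set.Ioc (0:ℝ) τ, F k s) = τ • ((((1 + k)! : ℝ)⁻¹) • (τ • T) ^ k) := by
    intro k
    rw [hF]
    simp only
    rw [_root_.integral_smul_const, ← intervalIntegral.integral_of_le hτ,
      intervalIntegral.integral_const_mul, integral_pow, smul_smul, smul_pow, smul_smul]
    congr 1
    have hk : ((1 + k)! : ℝ) = (1 + k) * (k)! := by
      rw [Nat.add_comm 1 k, Nat.factorial_succ]; push_cast; ring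
    rw [hk]
    have : ((k)! : ℝ) ≠ 0 := by positivity
    field_simp
    ring
  rw [intervalIntegral.integral_of_le hτ]
  have : (∫ s in Set.Ioc (0:ℝ) τ, NormedSpace.exp (s • T)) = ∫ s in Set.Ioc (0:ℝ) τ, ∑' k, F k s := by
    apply setIntegral_congr_fun measurableSet_Ioc
    intro s _
    exact (hexp s).symm
  rw [this]
  exact hHS.unique (by rw [funext heval] at *; exact h2)

lemma expFTC (T C : X →L[ℝ] X) (c s : ℝ) :
    (∫ u in c..s, C * (T * NormedSpace.exp (u • T))) =
      C * NormedSpace.exp (s • T) - C * NormedSpace.exp (c • T) := by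
  apply intervalIntegral.integral_eq_sub_of_hasDerivAt
  · exact fun u _ => ((hasDerivAt_exp_smul_const' T u).const_mul C)
  · exact (continuous_const.mul (continuous_const.mul (contExp T))).intervalIntegrable _ _

end Aux

theorem stmt7 {X : Type*} [NormedAddCommGroup X] [NormedSpace ℝ X] [CompleteSpace X]
    (A B : X →L[ℝ] X) (hcomm : A.comp B = B.comp A) (τ : ℝ) (hτ : 0 < τ) (M : ℝ) (hM : 0 ≤ M)
    (hA : ∀ s ∈ Set.Icc (0:ℝ) τ, ‖NormedSpace.exp (s • A)‖ ≤ M)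
    (hB : ∀ s ∈ Set.Icc (0:ℝ) τ, ‖NormedSpace.exp (s • B)‖ ≤ M) :
    ‖τ • phi 1 (τ • (A + B)) - τ • (NormedSpace.exp ((τ/2) • A)).comp (phi 1 (τ • B))‖ ≤
      M^2 * (‖B.comp A‖ + ‖A.comp A‖) * τ^3 := by
  set c : ℝ := τ / 2 with hcdef
  have hc : c ∈ Set.Icc (0:ℝ) τ := ⟨by positivity, by rw [hcdef]; linarith⟩
  have hAB : A * B = B * A := by
    rw [ContinuousLinearMap.mul_def, ContinuousLinearMap.mul_def]; exact hcomm
  have hABc : Commute A B := hAB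
  set Ec : X →L[ℝ] X := NormedSpace.exp (c • A) with hEc
  set P : X →L[ℝ] X := A * Ec * NormedSpace.exp (c • B) with hP
  set E : ℝ → (X →L[ℝ] X) := fun s =>
    NormedSpace.exp (s • A) * NormedSpace.exp (s • B) - Ec * NormedSpace.exp (s • B)
      - (s - c) • P with hEdef
  have hAEc : A * Ec = Ec * A := ((Commute.refl A).smul_right c).exp_right
  have habs : ∀ u ∈ Set.Icc (0:ℝ) τ, |u - c| ≤ τ/2 := by
    intro u hu
    obtain ⟨h1, h2⟩ := hu
    rw [abs_sub_le_iff, hcdef]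
    constructor <;> linarith
  have hmem : ∀ u ∈ Set.Icc (0:ℝ) τ, ∀ v ∈ Set.uIoc c u, v ∈ Set.Icc (0:ℝ) τ := by
    intro u hu v hv
    have h := Set.uIoc_subset_uIcc hv
    rcases le_total c u with h' | h'
    · rw [Set.uIcc_of_le h'] at h; exact ⟨le_trans hc.1 h.1, le_trans h.2 hu.2⟩
    · rw [Set.uIcc_of_ge h'] at h; exact ⟨le_trans hu.1 h.1, le_trans h.2 hc.2⟩
  -- step 1 : LHS is the norm of the integral of E
  have key : τ • phi 1 (τ • (A + B)) - τ • (NormedSpace.exp ((τ/2) • A)).comp (phi 1 (τ • B))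
      = ∫ s in (0:ℝ)..τ, E s := by
    have hint1 : (∫ s in (0:ℝ)..τ, NormedSpace.exp (s • (A + B))) = τ • phi 1 (τ • (A + B)) :=
      integral_exp_eq _ hτ.le
    have hmul : ∀ s : ℝ, NormedSpace.exp (s • (A + B))
        = NormedSpace.exp (s • A) * NormedSpace.exp (s • B) := by
      intro s
      rw [smul_add]
      let +nondep : NormedAlgebra ℚ (X →L[ℝ] X) := .restrictScalars ℚ ℝ _
      exact NormedSpace.exp_add_of_commute ((hABc.smul_left s).smul_right s)
    have hint2 : (∫ s in (0:ℝ)..τ, Ec * NormedSpace.exp (s • B))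
        = τ • (Ec.comp (phi 1 (τ • B))) := by
      have := (ContinuousLinearMap.mul ℝ (X →L[ℝ] X) Ec).intervalIntegral_comp_comm
        (a := 0) (b := τ) (μ := volume) ((contExp B).intervalIntegrable _ _)
      simp only [ContinuousLinearMap.mul_apply'] at this
      rw [this, integral_exp_eq _ hτ.le]
      rw [mul_smul_comm, ContinuousLinearMap.mul_def]
    have hzero : (∫ s in (0:ℝ)..τ, (s - c)) = 0 := by
      rw [intervalIntegral.integral_sub intervalIntegrable_id
        (intervalIntegrable_const (c := c)), integral_id,
        intervalIntegral.integral_const, hcdef, smul_eq_mul]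
      ring
    have hint3 : (∫ s in (0:ℝ)..τ, (s - c) • P) = 0 := by
      rw [intervalIntegral.integral_smul_const, hzero, zero_smul]
    rw [hEdef]
    rw [intervalIntegral.integral_sub, intervalIntegral.integral_sub]
    · rw [hint3, sub_zero]
      rw [← funext hmul, hint1, hint2]
    · exact ((contExp A).mul (contExp B)).intervalIntegrable _ _
    · exact (continuous_const.mul (contExp B)).intervalIntegrable _ _
    · exact (((contExp A).mul (contExp B)).sub
        (continuous_const.mul (contExp B))).intervalIntegrable _ _
    · exact ((continuous_id.sub continuous_const).smul continuous_const).intervalIntegrable _ _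
  rw [key]
  -- step 2: pointwise bound on E
  have hbound : ∀ s ∈ Set.uIoc (0:ℝ) τ, ‖E s‖ ≤ M^2 * (‖B.comp A‖ + ‖A.comp A‖) * (τ/2)^2 := by
    intro s hs
    rw [Set.uIoc_of_le hτ.le] at hs
    have hs' : s ∈ Set.Icc (0:ℝ) τ := ⟨hs.1.le, hs.2⟩
    -- bound on R s := exp (s•A) - Ec - (s-c) • (A * Ec)
    have hRbound : ‖NormedSpace.exp (s • A) - Ec - (s - c) • (A * Ec)‖
        ≤ ‖A.comp A‖ * M * (τ/2) * (τ/2) := by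
      have hrep : NormedSpace.exp (s • A) - Ec - (s - c) • (A * Ec)
          = ∫ u in c..s, (A * NormedSpace.exp (u • A) - A * Ec) := by
        rw [intervalIntegral.integral_sub]
        · have h1 : (∫ u in c..s, A * NormedSpace.exp (u • A))
              = NormedSpace.exp (s • A) - Ec := by
            have h := expFTC A 1 c s
            simp only [one_mul] at h
            rw [h]
          rw [h1, intervalIntegral.integral_const]
        · exact (continuous_const.mul (contExp A)).intervalIntegrable (μ := volume) _ _
        · exact continuous_const.intervalIntegrable (μ := volume) _ _
      have h2 : ‖∫ u in c..s, (A * NormedSpace.exp (u • A) - A * Ec)‖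
          ≤ (‖A.comp A‖ * M * (τ/2)) * |s - c| := by
        apply intervalIntegral.norm_integral_le_of_norm_le_const
        intro u hu
        have hu' : u ∈ Set.Icc (0:ℝ) τ := hmem s hs' u hu
        have hrep2 : A * NormedSpace.exp (u • A) - A * Ec
            = ∫ v in c..u, A * (A * NormedSpace.exp (v • A)) := by
          rw [expFTC A A c u]
        rw [hrep2]
        have h3 : ‖∫ v in c..u, A * (A * NormedSpace.exp (v • A))‖
            ≤ (‖A.comp A‖ * M) * |u - c| := by
          apply intervalIntegral.norm_integral_le_of_norm_le_const
          intro v hv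
          have hv' : v ∈ Set.Icc (0:ℝ) τ := hmem u hu' v hv
          rw [← mul_assoc, ← ContinuousLinearMap.mul_def A A]
          exact le_trans (norm_mul_le _ _)
            (mul_le_mul_of_nonneg_left (hA v hv') (norm_nonneg _))
        refine le_trans h3 ?_
        exact mul_le_mul_of_nonneg_left (habs u hu')
          (show (0:ℝ) ≤ ‖A.comp A‖ * M by positivity)
      rw [hrep]
      refine le_trans h2 ?_
      exact mul_le_mul_of_nonneg_left (habs s hs')
        (show (0:ℝ) ≤ ‖A.comp A‖ * M * (τ/2) by positivity)
    -- bound on the cross term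
    have hCross : ‖A * Ec * (NormedSpace.exp (s • B) - NormedSpace.exp (c • B))‖
        ≤ M * ‖B.comp A‖ * M * (τ/2) := by
      have hrep : A * Ec * (NormedSpace.exp (s • B) - NormedSpace.exp (c • B))
          = ∫ u in c..s, (A * Ec) * (B * NormedSpace.exp (u • B)) := by
        rw [expFTC B (A * Ec) c s, mul_sub]
      rw [hrep]
      have h3 : ‖∫ u in c..s, (A * Ec) * (B * NormedSpace.exp (u • B))‖
          ≤ (M * ‖B.comp A‖ * M) * |s - c| := by
        apply intervalIntegral.norm_integral_le_of_norm_le_const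
        intro u hu
        have hu' : u ∈ Set.Icc (0:ℝ) τ := hmem s hs' u hu
        have hre : (A * Ec) * (B * NormedSpace.exp (u • B))
            = Ec * ((B * A) * NormedSpace.exp (u • B)) := by
          rw [hAEc, ← hAB]
          noncomm_ring
        rw [hre, ← ContinuousLinearMap.mul_def B A]
        calc ‖Ec * (B.comp A * NormedSpace.exp (u • B))‖
            ≤ ‖Ec‖ * (‖B.comp A‖ * ‖NormedSpace.exp (u • B)‖) :=
              le_trans (norm_mul_le _ _)
                (mul_le_mul_of_nonneg_left (norm_mul_le _ _) (norm_nonneg _))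
          _ ≤ M * (‖B.comp A‖ * M) := by
              apply mul_le_mul (hA c hc) (mul_le_mul_of_nonneg_left (hB u hu') (norm_nonneg _))
                (by positivity) hM
          _ = M * ‖B.comp A‖ * M := by ring
      refine le_trans h3 ?_
      exact mul_le_mul_of_nonneg_left (habs s hs')
        (show (0:ℝ) ≤ M * ‖B.comp A‖ * M by positivity)
    -- decompose E s
    have hdecomp : E s = (NormedSpace.exp (s • A) - Ec - (s - c) • (A * Ec))
          * NormedSpace.exp (s • B)
        + (s - c) • (A * Ec * (NormedSpace.exp (s • B) - NormedSpace.exp (c • B))) := by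
      rw [hEdef, hP]
      simp only [sub_mul, smul_mul_assoc, mul_sub, smul_sub, mul_assoc]
      abel
    rw [hdecomp]
    refine le_trans (norm_add_le _ _) ?_
    have b1 : ‖(NormedSpace.exp (s • A) - Ec - (s - c) • (A * Ec))
          * NormedSpace.exp (s • B)‖ ≤ (‖A.comp A‖ * M * (τ/2) * (τ/2)) * M :=
      le_trans (norm_mul_le _ _)
        (mul_le_mul hRbound (hB s hs') (norm_nonneg _) (by positivity))
    have b2 : ‖(s - c) • (A * Ec * (NormedSpace.exp (s • B) - NormedSpace.exp (c • B)))‖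
        ≤ (τ/2) * (M * ‖B.comp A‖ * M * (τ/2)) := by
      rw [norm_smul (s - c) (A * Ec * (NormedSpace.exp (s • B) - NormedSpace.exp (c • B))), Real.norm_eq_abs]
      exact mul_le_mul (habs s hs') hCross (norm_nonneg _) (by positivity)
    nlinarith [norm_nonneg (A.comp A), norm_nonneg (B.comp A), sq_nonneg τ, sq_nonneg M,
      mul_nonneg hM hM]
  -- conclude
  have hfin := intervalIntegral.norm_integral_le_of_norm_le_const hbound
  refine le_trans hfin ?_
  rw [sub_zero, abs_of_nonneg hτ.le]
  have h0 : (0:ℝ) ≤ M^2 * (‖B.comp A‖ + ‖A.comp A‖) := by positivity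
  have h1 : (τ/2)^2 * τ ≤ τ^3 := by nlinarith
  calc M^2 * (‖B.comp A‖ + ‖A.comp A‖) * (τ/2)^2 * τ
      = M^2 * (‖B.comp A‖ + ‖A.comp A‖) * ((τ/2)^2 * τ) := by ring
    _ ≤ M^2 * (‖B.comp A‖ + ‖A.comp A‖) * τ^3 := mul_le_mul_of_nonneg_left h1 h0
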